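/- Let η: ℝ → ℝ be a differentiable function with η'(θ) > 0 for all θ, satisfying the Riccati equation η' = −(λ/2)η² + aη + b for constants λ, a, b ∈ ℝ with λ ≠ 0 and discriminant a² + 2bλ > 0, and suppose η is bounded. Let α < β be the two real roots of −(λ/2)x² + ax + b. Then the image of η is contained in the open interval (α, β). -/

import Mathlib

theorem riccati_image_in_roots (η : ℝ → ℝ) (lam a b α β : ℝ)
    (hdiff : Differentiable ℝ η)
    (hpos : ∀ θ, 0 < deriv η θ)
    (hode : ∀ θ, deriv η θ = -(lam / 2) * η θ ^ 2 + a * η θ + b)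
    (hlam : lam ≠ 0) (hdisc : 0 < a ^ 2 + 2 * b * lam)
    (hbdd : ∃ M, ∀ θ, |η θ| ≤ M)
    (hα : -(lam / 2) * α ^ 2 + a * α + b = 0)
    (hβ : -(lam / 2) * β ^ 2 + a * β + b = 0)
    (hαβ : α < β) :
    ∀ θ : ℝ, α < η θ ∧ η θ < β := by
  have hmono : StrictMono η := strictMono_of_deriv_pos hpos
  obtain ⟨M, hM⟩ := hbdd
  -- Vieta: express a, b in terms of α, β
  have h1 : (β - α) * (a - lam / 2 * (α + β)) = 0 := by linear_combination hβ - hα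
  have hab : a = lam / 2 * (α + β) := by
    rcases mul_eq_zero.1 h1 with h | h
    · exfalso; linarith
    · linarith
  subst hab
  have hb : b = -(lam / 2) * (α * β) := by linear_combination hα
  subst hb
  -- show lam > 0
  have hlampos : 0 < lam := by
    rcases hlam.lt_or_gt with hneg | hposl
    · exfalso
      rcases lt_trichotomy (η 0) α with hc | hc | hc
      · -- η 0 < α : go to -∞
        set c := deriv η 0 with hcdef
        have hc0 : 0 < c := hpos 0
        have hM0 : -M ≤ η 0 := (abs_le.1 (hM 0)).1
        set θ₀ : ℝ := (-M - 1 - η 0) / c with hθdef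
        have hθneg : θ₀ < 0 := div_neg_of_neg_of_pos (by linarith) hc0
        obtain ⟨ξ, hξ, hslope⟩ := exists_hasDerivAt_eq_slope η (deriv η) hθneg
          hdiff.continuous.continuousOn (fun x _ => (hdiff x).hasDerivAt)
        have hξle : η ξ ≤ η 0 := (hmono.monotone hξ.2.le)
        have hQ : c ≤ deriv η ξ := by
          rw [hode ξ, hcdef, hode 0]
          nlinarith [mul_nonneg (mul_nonneg (by linarith : (0:ℝ) ≤ -lam)
            (by linarith : (0:ℝ) ≤ η 0 - η ξ))
            (by linarith : (0:ℝ) ≤ α + β - η ξ - η 0)]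
        rw [hslope] at hQ
        have h2 : c * (0 - θ₀) ≤ η 0 - η θ₀ := by
          rw [← le_div_iff₀ (by linarith : (0:ℝ) < 0 - θ₀)]
          exact hQ
        have h3 : c * (0 - θ₀) = M + 1 + η 0 := by
          rw [hθdef]
          field_simp
          ring
        have h4 : -M ≤ η θ₀ := (abs_le.1 (hM θ₀)).1
        linarith
      · -- η 0 = α : derivative zero
        have h0 := hpos 0
        rw [hode 0, hc] at h0
        have : -(lam / 2) * α ^ 2 + lam / 2 * (α + β) * α + -(lam / 2) * (α * β) = 0 := by
          ring
        linarith
      · rcases lt_trichotomy (η 0) β with hd | hd | hd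
        · -- α < η 0 < β : Q(η 0) < 0 when lam < 0
          have h0 := hpos 0
          rw [hode 0] at h0
          nlinarith [mul_pos (mul_pos (by linarith : (0:ℝ) < -lam)
            (by linarith : (0:ℝ) < η 0 - α)) (by linarith : (0:ℝ) < β - η 0)]
        · -- η 0 = β : derivative zero
          have h0 := hpos 0
          rw [hode 0, hd] at h0
          have : -(lam / 2) * β ^ 2 + lam / 2 * (α + β) * β + -(lam / 2) * (α * β) = 0 := by
            ring
          linarith
        · -- η 0 > β : go to +∞
          set c := deriv η 0 with hcdef
          have hc0 : 0 < c := hpos 0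
          have hM0 : η 0 ≤ M := (abs_le.1 (hM 0)).2
          set θ₀ : ℝ := (M + 1 - η 0) / c with hθdef
          have hθpos : 0 < θ₀ := div_pos (by linarith) hc0
          obtain ⟨ξ, hξ, hslope⟩ := exists_hasDerivAt_eq_slope η (deriv η) hθpos
            hdiff.continuous.continuousOn (fun x _ => (hdiff x).hasDerivAt)
          have hξge : η 0 ≤ η ξ := (hmono.monotone hξ.1.le)
          have hQ : c ≤ deriv η ξ := by
            rw [hode ξ, hcdef, hode 0]
            nlinarith [mul_nonneg (mul_nonneg (by linarith : (0:ℝ) ≤ -lam)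
              (by linarith : (0:ℝ) ≤ η ξ - η 0))
              (by linarith : (0:ℝ) ≤ η ξ + η 0 - α - β)]
          rw [hslope] at hQ
          have h2 : c * (θ₀ - 0) ≤ η θ₀ - η 0 := by
            rw [← le_div_iff₀ (by linarith : (0:ℝ) < θ₀ - 0)]
            exact hQ
          have h3 : c * (θ₀ - 0) = M + 1 - η 0 := by
            rw [hθdef]
            field_simp
            ring
          have h4 : η θ₀ ≤ M := (abs_le.1 (hM θ₀)).2
          linarith
    · exact hposl
  -- main conclusion
  intro θ
  have h0 := hpos θ
  rw [hode θ] at h0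
  constructor
  · by_contra hcon
    push_neg at hcon
    nlinarith [mul_nonneg (mul_nonneg hlampos.le (by linarith : (0:ℝ) ≤ α - η θ))
      (by linarith : (0:ℝ) ≤ β - η θ)]
  · by_contra hcon
    push_neg at hcon
    nlinarith [mul_nonneg (mul_nonneg hlampos.le (by linarith : (0:ℝ) ≤ η θ - β))
      (by linarith : (0:ℝ) ≤ η θ - α)]
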